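/- The number of permutations of a set of size p ≥ 2n−1 that separate a fixed simple pair (X, Y) of n-sets with X ∩ Y = {y} equals p!·(n−1)!·(n−1)!/(2n−1)!. -/

import Mathlib

open Classical

/-- `π` separates the simple pair `(X, Y)`: with `X ∩ Y = {y}`, all of `X \ {y}`
precedes `y` and `y` precedes all of `Y \ {y}` in the ordering `π`. -/
def Separates {V : Type*} [Fintype V] [DecidableEq V] (π : V ≃ Fin (Fintype.card V))
    (X Y : Finset V) : Prop :=
  ∃ y, X ∩ Y = {y} ∧ (∀ x ∈ X, x ≠ y → π x < π y) ∧ (∀ z ∈ Y, z ≠ y → π y < π z)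

/-- A hypergraph with edge set `E` is 2-colorable if some 2-coloring of the vertices
leaves no edge monochromatic. -/
def TwoColorable {V : Type*} (E : Finset (Finset V)) : Prop :=
  ∃ c : V → Bool, ∀ X ∈ E, (∃ v ∈ X, c v = true) ∧ (∃ v ∈ X, c v = false)

/-- `m₂(H)`: the number of ordered simple pairs of edges. -/
def m2 {V : Type*} [DecidableEq V] (E : Finset (Finset V)) : ℕ :=
  ((E ×ˢ E).filter fun p => (p.1 ∩ p.2).card = 1).card

open Finset

private lemma rank_aux {α : Type*} [LinearOrder α] (T : Finset α) {N : ℕ} (hT : T.card = N) (i : Fin N) :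
    (T.filter (fun t => t < (T.orderIsoOfFin hT i : α))).card = (i : ℕ) := by
  classical
  have himg : T.filter (fun t => t < (T.orderIsoOfFin hT i : α))
      = (Finset.univ.filter (fun j : Fin N => j < i)).image
          (fun j => (T.orderIsoOfFin hT j : α)) := by
    ext t
    simp only [mem_filter, mem_image, mem_univ, true_and]
    constructor
    · rintro ⟨ht, hlt⟩
      refine ⟨(T.orderIsoOfFin hT).symm ⟨t, ht⟩, ?_, by simp⟩
      have h2 : (T.orderIsoOfFin hT) ((T.orderIsoOfFin hT).symm ⟨t, ht⟩) < T.orderIsoOfFin hT i := by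
        rw [OrderIso.apply_symm_apply]
        exact Subtype.mk_lt_mk.mpr hlt
      exact (T.orderIsoOfFin hT).lt_iff_lt.mp h2
    · rintro ⟨j, hj, rfl⟩
      refine ⟨(T.orderIsoOfFin hT j).2, ?_⟩
      exact Subtype.mk_lt_mk.mp ((T.orderIsoOfFin hT).lt_iff_lt.mpr hj)
  rw [himg, Finset.card_image_of_injective _
    (fun a b hab => (T.orderIsoOfFin hT).injective (Subtype.val_injective hab))]
  rw [← Fin.card_Iio (b := i)]; congr 1; ext j; simp

lemma crux {V : Type*} [Fintype V] [DecidableEq V] (π : V ≃ Fin (Fintype.card V))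
    (S X' Y' : Finset V) (y : V) (k : ℕ)
    (hX'S : X' ⊆ S) (hY'S : Y' ⊆ S) (hyS : y ∈ S)
    (hyX' : y ∉ X') (hyY' : y ∉ Y') (hdisj : ∀ v ∈ X', v ∉ Y')
    (hcover : ∀ s ∈ S, s ∈ X' ∨ s = y ∨ s ∈ Y')
    (hX' : X'.card = k) (hY' : Y'.card = k) (hS : S.card = 2 * k + 1) :
    (Finset.univ.filter (fun g : Equiv.Perm ↥S =>
      (∀ x : ↥S, ↑x ∈ X' → π ↑(g x) < π ↑(g ⟨y, hyS⟩)) ∧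
      (∀ z : ↥S, ↑z ∈ Y' → π ↑(g ⟨y, hyS⟩) < π ↑(g z)))).card
    = Nat.factorial k * Nat.factorial k := by
  classical
  set T : Finset (Fin (Fintype.card V)) := S.image (fun v => π v) with hTdef
  have hTcard : T.card = 2 * k + 1 := by
    rw [hTdef, Finset.card_image_of_injective _ π.injective, hS]
  set e := T.orderIsoOfFin hTcard with hedef
  have hk : k < 2 * k + 1 := by omega
  set m : V := π.symm ↑(e ⟨k, hk⟩) with hmdef
  have hπm : π m = ↑(e ⟨k, hk⟩) := π.apply_symm_apply _
  have hmS : m ∈ S := by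
    have h1 : (↑(e ⟨k, hk⟩) : Fin (Fintype.card V)) ∈ T := (e ⟨k, hk⟩).2
    rcases Finset.mem_image.1 h1 with ⟨s, hs, hsv⟩
    have : m = s := by rw [hmdef, ← hsv, Equiv.symm_apply_apply]
    rwa [this]
  -- rank formula
  have hrank : ∀ s (hs : s ∈ S), (S.filter (fun t => π t < π s)).card
      = ((e.symm ⟨π s, Finset.mem_image_of_mem _ hs⟩ : Fin (2*k+1)) : ℕ) := by
    intro s hs
    have hπsT : π s ∈ T := Finset.mem_image_of_mem _ hs
    have himg : (S.filter (fun t => π t < π s)).image (fun v => π v)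
        = T.filter (fun t => t < π s) := by
      ext u
      simp only [Finset.mem_image, Finset.mem_filter, hTdef]
      constructor
      · rintro ⟨t, ⟨htS, hlt⟩, rfl⟩
        exact ⟨⟨t, htS, rfl⟩, hlt⟩
      · rintro ⟨⟨t, htS, rfl⟩, hlt⟩
        exact ⟨t, ⟨htS, hlt⟩, rfl⟩
    have hc : (S.filter (fun t => π t < π s)).card = (T.filter (fun t => t < π s)).card := by
      rw [← himg, Finset.card_image_of_injective _ π.injective]
    have hse : π s = ↑(e (e.symm ⟨π s, hπsT⟩)) := by
      rw [OrderIso.apply_symm_apply]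
    rw [hc]
    calc (T.filter (fun t => t < π s)).card
        = (T.filter (fun t => t < (e (e.symm ⟨π s, hπsT⟩) : Fin (Fintype.card V)))).card := by
          congr 1; ext t; rw [← hse]
      _ = _ := rank_aux T hTcard _
  -- uniqueness of median
  have hmed : ∀ s ∈ S, (S.filter (fun t => π t < π s)).card = k → s = m := by
    intro s hs hcard
    have h1 := hrank s hs
    rw [hcard] at h1
    have h2 : e.symm ⟨π s, Finset.mem_image_of_mem _ hs⟩ = ⟨k, hk⟩ := by
      apply Fin.ext; exact h1.symm
    have h3 : π s = ↑(e ⟨k, hk⟩) := by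
      rw [← h2, OrderIso.apply_symm_apply]
    have : π s = π m := by rw [h3, hπm]
    exact π.injective this
  -- partition count
  have hpart : ∀ s ∈ S, (S.filter (fun t => π t < π s)).card
      + (S.filter (fun t => π s < π t)).card + 1 = 2 * k + 1 := by
    intro s hs
    have hneg : S.filter (fun t => ¬ π t < π s) = insert s (S.filter (fun t => π s < π t)) := by
      ext t
      simp only [Finset.mem_filter, Finset.mem_insert, not_lt]
      constructor
      · rintro ⟨htS, hle⟩
        rcases lt_or_eq_of_le hle with h | h
        · exact Or.inr ⟨htS, h⟩
        · exact Or.inl (π.injective h).symm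
      · rintro (rfl | ⟨htS, hlt⟩)
        · exact ⟨hs, le_refl _⟩
        · exact ⟨htS, le_of_lt hlt⟩
    have hnotmem : s ∉ S.filter (fun t => π s < π t) := by
      simp only [Finset.mem_filter]
      rintro ⟨-, h⟩; exact lt_irrefl _ h
    have := Finset.card_filter_add_card_filter_not
      (s := S) (p := fun t => π t < π s)
    rw [hneg, Finset.card_insert_of_notMem hnotmem, hS] at this
    omega
  have hBm : (S.filter (fun t => π t < π m)).card = k := by
    have h1 := hrank m hmS
    have h2 : e.symm ⟨π m, Finset.mem_image_of_mem _ hmS⟩ = ⟨k, hk⟩ := by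
      apply e.injective
      rw [OrderIso.apply_symm_apply]
      apply Subtype.ext; exact hπm
    rw [h1, h2]
  have hCm : (S.filter (fun t => π m < π t)).card = k := by
    have := hpart m hmS
    omega
  -- key: g sends y to m
  have hkey : ∀ g : Equiv.Perm ↥S,
      (∀ x : ↥S, ↑x ∈ X' → π ↑(g x) < π ↑(g ⟨y, hyS⟩)) →
      (∀ z : ↥S, ↑z ∈ Y' → π ↑(g ⟨y, hyS⟩) < π ↑(g z)) →
      (↑(g ⟨y, hyS⟩) : V) = m := by
    intro g h1 h2
    set w : V := ↑(g ⟨y, hyS⟩) with hwdef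
    have hwS : w ∈ S := (g ⟨y, hyS⟩).2
    have hf : ∀ v, v ∈ S → V := fun v hv => ↑(g ⟨v, hv⟩)
    have hlow : k ≤ (S.filter (fun t => π t < π w)).card := by
      rw [← hX']
      apply Finset.card_le_card_of_injOn (fun v => if h : v ∈ S then (↑(g ⟨v, h⟩) : V) else v)
      · intro x hx
        have hxS : x ∈ S := hX'S hx
        simp only [dif_pos hxS, Finset.mem_coe, Finset.mem_filter]
        exact ⟨(g ⟨x, hxS⟩).2, h1 ⟨x, hxS⟩ hx⟩
      · intro a ha b hb hab
        have haS : a ∈ S := hX'S ha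
        have hbS : b ∈ S := hX'S hb
        simp only [dif_pos haS, dif_pos hbS] at hab
        have : g ⟨a, haS⟩ = g ⟨b, hbS⟩ := Subtype.ext hab
        exact congrArg Subtype.val (g.injective this)
    have hhigh : k ≤ (S.filter (fun t => π w < π t)).card := by
      rw [← hY']
      apply Finset.card_le_card_of_injOn (fun v => if h : v ∈ S then (↑(g ⟨v, h⟩) : V) else v)
      · intro z hz
        have hzS : z ∈ S := hY'S hz
        simp only [dif_pos hzS, Finset.mem_coe, Finset.mem_filter]
        exact ⟨(g ⟨z, hzS⟩).2, h2 ⟨z, hzS⟩ hz⟩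
      · intro a ha b hb hab
        have haS : a ∈ S := hY'S ha
        have hbS : b ∈ S := hY'S hb
        simp only [dif_pos haS, dif_pos hbS] at hab
        have : g ⟨a, haS⟩ = g ⟨b, hbS⟩ := Subtype.ext hab
        exact congrArg Subtype.val (g.injective this)
    have := hpart w hwS
    exact hmed w hwS (by omega)
  -- the bijection
  set B : Finset V := S.filter (fun t => π t < π m) with hBdef
  set C : Finset V := S.filter (fun t => π m < π t) with hCdef
  have hBS : B ⊆ S := Finset.filter_subset _ _
  have hCS : C ⊆ S := Finset.filter_subset _ _
  have hmB : m ∉ B := by simp [hBdef]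
  have hmC : m ∉ C := by simp [hCdef]
  have hBC : ∀ v ∈ B, v ∉ C := by
    intro v hv hvc
    rw [hBdef, Finset.mem_filter] at hv
    rw [hCdef, Finset.mem_filter] at hvc
    exact lt_asymm hv.2 hvc.2
  have hcX' : Fintype.card ↥X' = k := by rw [Fintype.card_coe, hX']
  have hcY' : Fintype.card ↥Y' = k := by rw [Fintype.card_coe, hY']
  have hcB : Fintype.card ↥B = k := by rw [Fintype.card_coe]; exact hBm
  have hcC : Fintype.card ↥C = k := by rw [Fintype.card_coe]; exact hCm
  have htarget : (Finset.univ : Finset ((↥X' ≃ ↥B) × (↥Y' ≃ ↥C))).card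
      = Nat.factorial k * Nat.factorial k := by
    rw [Finset.card_univ, Fintype.card_prod,
      Fintype.card_equiv (Fintype.equivOfCardEq (by rw [hcX', hcB])),
      Fintype.card_equiv (Fintype.equivOfCardEq (by rw [hcY', hcC])), hcX', hcY']
  rw [← htarget]
  set Good : Finset (Equiv.Perm ↥S) := Finset.univ.filter (fun g : Equiv.Perm ↥S =>
      (∀ x : ↥S, ↑x ∈ X' → π ↑(g x) < π ↑(g ⟨y, hyS⟩)) ∧
      (∀ z : ↥S, ↑z ∈ Y' → π ↑(g ⟨y, hyS⟩) < π ↑(g z))) with hGood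
  have hmemB : ∀ g (hg : g ∈ Good) (x : ↥X'), (↑(g ⟨↑x, hX'S x.2⟩) : V) ∈ B := by
    intro g hg x
    have hP := (Finset.mem_filter.1 hg).2
    have hgy := hkey g hP.1 hP.2
    rw [hBdef, Finset.mem_filter]
    refine ⟨(g ⟨↑x, hX'S x.2⟩).2, ?_⟩
    have := hP.1 ⟨↑x, hX'S x.2⟩ x.2
    rwa [hgy] at this
  have hmemC : ∀ g (hg : g ∈ Good) (z : ↥Y'), (↑(g ⟨↑z, hY'S z.2⟩) : V) ∈ C := by
    intro g hg z
    have hP := (Finset.mem_filter.1 hg).2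
    have hgy := hkey g hP.1 hP.2
    rw [hCdef, Finset.mem_filter]
    refine ⟨(g ⟨↑z, hY'S z.2⟩).2, ?_⟩
    have := hP.2 ⟨↑z, hY'S z.2⟩ z.2
    rwa [hgy] at this
  have hbijB : ∀ g (hg : g ∈ Good), Function.Bijective
      (fun x : ↥X' => (⟨↑(g ⟨↑x, hX'S x.2⟩), hmemB g hg x⟩ : ↥B)) := by
    intro g hg
    refine (Fintype.bijective_iff_injective_and_card _).2 ⟨?_, by rw [hcX', hcB]⟩
    intro x x' h
    have h1 : (↑(g ⟨↑x, hX'S x.2⟩) : V) = ↑(g ⟨↑x', hX'S x'.2⟩) :=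
      congrArg (fun t : ↥B => (t : V)) h
    have h2 := g.injective (Subtype.ext h1)
    exact Subtype.ext (congrArg (fun t : ↥S => (t : V)) h2)
  have hbijC : ∀ g (hg : g ∈ Good), Function.Bijective
      (fun z : ↥Y' => (⟨↑(g ⟨↑z, hY'S z.2⟩), hmemC g hg z⟩ : ↥C)) := by
    intro g hg
    refine (Fintype.bijective_iff_injective_and_card _).2 ⟨?_, by rw [hcY', hcC]⟩
    intro z z' h
    have h1 : (↑(g ⟨↑z, hY'S z.2⟩) : V) = ↑(g ⟨↑z', hY'S z'.2⟩) :=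
      congrArg (fun t : ↥C => (t : V)) h
    have h2 := g.injective (Subtype.ext h1)
    exact Subtype.ext (congrArg (fun t : ↥S => (t : V)) h2)
  refine Finset.card_bij (fun g hg =>
    (Equiv.ofBijective _ (hbijB g hg), Equiv.ofBijective _ (hbijC g hg))) ?_ ?_ ?_
  · intro g hg; exact Finset.mem_univ _
  · -- injectivity
    intro g hg g' hg' heq
    have hP := (Finset.mem_filter.1 hg).2
    have hP' := (Finset.mem_filter.1 hg').2
    have hgy := hkey g hP.1 hP.2
    have hgy' := hkey g' hP'.1 hP'.2
    have h1 := congrArg Prod.fst heq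
    have h2 := congrArg Prod.snd heq
    apply Equiv.ext
    intro s
    rcases hcover ↑s s.2 with hx | hyv | hz
    · have := congrFun (congrArg (fun (e : ↥X' ≃ ↥B) => (e : ↥X' → ↥B)) h1) ⟨↑s, hx⟩
      simp only [Equiv.ofBijective_apply] at this
      have hv : (↑(g ⟨↑s, hX'S hx⟩) : V) = ↑(g' ⟨↑s, hX'S hx⟩) :=
        congrArg (fun t : ↥B => (t : V)) this
      have hs : (⟨↑s, hX'S hx⟩ : ↥S) = s := Subtype.ext rfl
      rw [hs] at hv
      exact Subtype.ext hv
    · have hsy : s = ⟨y, hyS⟩ := Subtype.ext hyv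
      rw [hsy]
      exact Subtype.ext (hgy.trans hgy'.symm)
    · have := congrFun (congrArg (fun (e : ↥Y' ≃ ↥C) => (e : ↥Y' → ↥C)) h2) ⟨↑s, hz⟩
      simp only [Equiv.ofBijective_apply] at this
      have hv : (↑(g ⟨↑s, hY'S hz⟩) : V) = ↑(g' ⟨↑s, hY'S hz⟩) :=
        congrArg (fun t : ↥C => (t : V)) this
      have hs : (⟨↑s, hY'S hz⟩ : ↥S) = s := Subtype.ext rfl
      rw [hs] at hv
      exact Subtype.ext hv
  · -- surjectivity
    rintro ⟨a, b⟩ -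
    have GmemB : ∀ (x : ↥X'), (↑(a x) : V) ∈ B := fun x => (a x).2
    have GmemC : ∀ (z : ↥Y'), (↑(b z) : V) ∈ C := fun z => (b z).2
    set G : ↥S → ↥S := fun s =>
      if h : ↑s ∈ X' then ⟨↑(a ⟨↑s, h⟩), hBS (GmemB ⟨↑s, h⟩)⟩
      else if h' : ↑s ∈ Y' then ⟨↑(b ⟨↑s, h'⟩), hCS (GmemC ⟨↑s, h'⟩)⟩
      else ⟨m, hmS⟩ with hGdef
    have hGX : ∀ (s : ↥S) (h : ↑s ∈ X'), G s = ⟨↑(a ⟨↑s, h⟩), hBS (GmemB ⟨↑s, h⟩)⟩ := by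
      intro s h; rw [hGdef]; simp only [dif_pos h]
    have hGY : ∀ (s : ↥S) (h : ↑s ∈ Y'), G s = ⟨↑(b ⟨↑s, h⟩), hCS (GmemC ⟨↑s, h⟩)⟩ := by
      intro s h
      have hx : ↑s ∉ X' := fun hc => hdisj _ hc h
      rw [hGdef]; simp only [dif_neg hx, dif_pos h]
    have hGy : G ⟨y, hyS⟩ = ⟨m, hmS⟩ := by
      rw [hGdef]; simp only [dif_neg hyX', dif_neg hyY']
    have hGinj : Function.Injective G := by
      intro s s' h
      rcases hcover ↑s s.2 with h1 | h1 | h1 <;> rcases hcover ↑s' s'.2 with h2 | h2 | h2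
      · rw [hGX s h1, hGX s' h2] at h
        have hv : (↑(a ⟨↑s, h1⟩) : V) = ↑(a ⟨↑s', h2⟩) := congrArg (fun t : ↥S => (t : V)) h
        have h3 := a.injective (Subtype.ext hv)
        exact Subtype.ext (congrArg (fun t : ↥X' => (t : V)) h3)
      · exfalso
        have hs2 : s' = ⟨y, hyS⟩ := Subtype.ext h2
        rw [hGX s h1, hs2, hGy] at h
        have hv : (↑(a ⟨↑s, h1⟩) : V) = m := congrArg (fun t : ↥S => (t : V)) h
        exact hmB (hv ▸ GmemB ⟨↑s, h1⟩)
      · exfalso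
        rw [hGX s h1, hGY s' h2] at h
        have hv : (↑(a ⟨↑s, h1⟩) : V) = ↑(b ⟨↑s', h2⟩) := congrArg (fun t : ↥S => (t : V)) h
        exact hBC _ (GmemB ⟨↑s, h1⟩) (hv ▸ GmemC ⟨↑s', h2⟩)
      · exfalso
        have hs1 : s = ⟨y, hyS⟩ := Subtype.ext h1
        rw [hs1, hGy, hGX s' h2] at h
        have hv : (m : V) = ↑(a ⟨↑s', h2⟩) := congrArg (fun t : ↥S => (t : V)) h
        exact hmB (hv ▸ GmemB ⟨↑s', h2⟩)
      · have hs1 : s = ⟨y, hyS⟩ := Subtype.ext h1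
        have hs2 : s' = ⟨y, hyS⟩ := Subtype.ext h2
        rw [hs1, hs2]
      · exfalso
        have hs1 : s = ⟨y, hyS⟩ := Subtype.ext h1
        rw [hs1, hGy, hGY s' h2] at h
        have hv : (m : V) = ↑(b ⟨↑s', h2⟩) := congrArg (fun t : ↥S => (t : V)) h
        exact hmC (hv ▸ GmemC ⟨↑s', h2⟩)
      · exfalso
        rw [hGY s h1, hGX s' h2] at h
        have hv : (↑(b ⟨↑s, h1⟩) : V) = ↑(a ⟨↑s', h2⟩) := congrArg (fun t : ↥S => (t : V)) h
        exact hBC _ (GmemB ⟨↑s', h2⟩) (hv ▸ GmemC ⟨↑s, h1⟩)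
      · exfalso
        have hs2 : s' = ⟨y, hyS⟩ := Subtype.ext h2
        rw [hGY s h1, hs2, hGy] at h
        have hv : (↑(b ⟨↑s, h1⟩) : V) = m := congrArg (fun t : ↥S => (t : V)) h
        exact hmC (hv ▸ GmemC ⟨↑s, h1⟩)
      · rw [hGY s h1, hGY s' h2] at h
        have hv : (↑(b ⟨↑s, h1⟩) : V) = ↑(b ⟨↑s', h2⟩) := congrArg (fun t : ↥S => (t : V)) h
        have h3 := b.injective (Subtype.ext hv)
        exact Subtype.ext (congrArg (fun t : ↥Y' => (t : V)) h3)
    have hGbij : Function.Bijective G :=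
      (Fintype.bijective_iff_injective_and_card G).2 ⟨hGinj, rfl⟩
    set g : Equiv.Perm ↥S := Equiv.ofBijective G hGbij with hgdef
    have hgapp : ∀ s : ↥S, g s = G s := fun s => rfl
    have hgy : g ⟨y, hyS⟩ = ⟨m, hmS⟩ := by rw [hgapp, hGy]
    have hgGood : g ∈ Good := by
      rw [hGood, Finset.mem_filter]
      refine ⟨Finset.mem_univ _, ?_, ?_⟩
      · intro x hx
        rw [hgy]
        have hval : (↑(g x) : V) = ↑(a ⟨↑x, hx⟩) :=
          congrArg (fun t : ↥S => (t : V)) ((hgapp x).trans (hGX x hx))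
        rw [hval]
        exact (Finset.mem_filter.1 (GmemB ⟨↑x, hx⟩)).2
      · intro z hz
        rw [hgy]
        have hval : (↑(g z) : V) = ↑(b ⟨↑z, hz⟩) :=
          congrArg (fun t : ↥S => (t : V)) ((hgapp z).trans (hGY z hz))
        rw [hval]
        exact (Finset.mem_filter.1 (GmemC ⟨↑z, hz⟩)).2
    refine ⟨g, hgGood, ?_⟩
    refine Prod.ext ?_ ?_
    · apply Equiv.ext
      intro x
      apply Subtype.ext
      show (↑(g ⟨↑x, hX'S x.2⟩) : V) = ↑(a x)
      exact congrArg (fun t : ↥S => (t : V)) ((hgapp _).trans (hGX _ x.2))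
    · apply Equiv.ext
      intro z
      apply Subtype.ext
      show (↑(g ⟨↑z, hY'S z.2⟩) : V) = ↑(b z)
      exact congrArg (fun t : ↥S => (t : V)) ((hgapp _).trans (hGY _ z.2))


open Finset in

theorem stmt_17 {V : Type*} [Fintype V] [DecidableEq V] (n p : ℕ)
    (hp : Fintype.card V = p) (hpn : 2 * n - 1 ≤ p)
    (X Y : Finset V) (y : V)
    (hX : X.card = n) (hY : Y.card = n) (hy : X ∩ Y = {y}) :
    ((Finset.univ.filter fun π : V ≃ Fin (Fintype.card V) => Separates π X Y).card : ℚ)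
      = (Nat.factorial p : ℚ) * (Nat.factorial (n - 1) : ℚ) * (Nat.factorial (n - 1) : ℚ)
        / (Nat.factorial (2 * n - 1) : ℚ) := by
  classical
  subst hp
  have hyXY : y ∈ X ∩ Y := by rw [hy]; exact Finset.mem_singleton_self y
  have hyX : y ∈ X := (Finset.mem_inter.1 hyXY).1
  have hyY : y ∈ Y := (Finset.mem_inter.1 hyXY).2
  have hn : 1 ≤ n := by rw [← hX]; exact Finset.card_pos.2 ⟨y, hyX⟩
  set k := n - 1 with hk
  set X' := X.erase y with hX'def
  set Y' := Y.erase y with hY'def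
  set S := X ∪ Y with hSdef
  have hX'c : X'.card = k := by rw [hX'def, Finset.card_erase_of_mem hyX, hX]
  have hY'c : Y'.card = k := by rw [hY'def, Finset.card_erase_of_mem hyY, hY]
  have hSc : S.card = 2 * k + 1 := by
    have h := Finset.card_union_add_card_inter X Y
    rw [hy, Finset.card_singleton, hX, hY] at h
    rw [hSdef]; omega
  have hyS : y ∈ S := Finset.mem_union_left _ hyX
  have hX'S : X' ⊆ S := (Finset.erase_subset _ _).trans Finset.subset_union_left
  have hY'S : Y' ⊆ S := (Finset.erase_subset _ _).trans Finset.subset_union_right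
  have hyX' : y ∉ X' := Finset.notMem_erase _ _
  have hyY' : y ∉ Y' := Finset.notMem_erase _ _
  have hdisj : ∀ v ∈ X', v ∉ Y' := by
    intro v hv hv'
    have h1 : v ∈ X ∩ Y :=
      Finset.mem_inter.2 ⟨Finset.mem_of_mem_erase hv, Finset.mem_of_mem_erase hv'⟩
    rw [hy, Finset.mem_singleton] at h1
    exact (Finset.ne_of_mem_erase hv) h1
  have hcover : ∀ s ∈ S, s ∈ X' ∨ s = y ∨ s ∈ Y' := by
    intro s hs
    by_cases h : s = y
    · exact Or.inr (Or.inl h)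
    · rcases Finset.mem_union.1 hs with h1 | h1
      · exact Or.inl (Finset.mem_erase.2 ⟨h, h1⟩)
      · exact Or.inr (Or.inr (Finset.mem_erase.2 ⟨h, h1⟩))
  have hsep : ∀ π' : V ≃ Fin (Fintype.card V), Separates π' X Y ↔
      ((∀ x ∈ X, x ≠ y → π' x < π' y) ∧ (∀ z ∈ Y, z ≠ y → π' y < π' z)) := by
    intro π'
    constructor
    · rintro ⟨y', h1, h2, h3⟩
      rw [hy] at h1
      have hyy : y = y' := Finset.singleton_injective h1
      rw [← hyy] at h2 h3
      exact ⟨h2, h3⟩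
    · rintro ⟨h2, h3⟩; exact ⟨y, hy, h2, h3⟩
  have hextapp : ∀ (g : Equiv.Perm ↥S) (v : V) (hv : v ∈ S),
      (g.extendDomain (Equiv.refl ↥S)) v = ↑(g ⟨v, hv⟩) := by
    intro g v hv
    rw [Equiv.Perm.extendDomain_apply_subtype _ _ hv]
    rfl
  have htriv : ∀ (E : V ≃ V) (π₁ : V ≃ Fin (Fintype.card V)),
      E.trans (E.symm.trans π₁) = π₁ := by
    intro E π₁; ext v; simp
  have htriv2 : ∀ (E : V ≃ V) (π₁ : V ≃ Fin (Fintype.card V)),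
      E.symm.trans (E.trans π₁) = π₁ := by
    intro E π₁; ext v; simp
  set A := Finset.univ.filter (fun π : V ≃ Fin (Fintype.card V) => Separates π X Y) with hA
  set P := Finset.univ.filter (fun pr : (V ≃ Fin (Fintype.card V)) × Equiv.Perm ↥S =>
    Separates ((pr.2.extendDomain (Equiv.refl ↥S)).trans pr.1) X Y) with hP
  have hcount1 : P.card = A.card * Nat.factorial (2 * k + 1) := by
    rw [Finset.card_eq_sum_card_fiberwise
      (f := fun pr : (V ≃ Fin (Fintype.card V)) × Equiv.Perm ↥S =>
        (pr.2.extendDomain (Equiv.refl ↥S)).trans pr.1) (t := A)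
      (fun pr hpr => by
        rw [hA, Finset.mem_coe, Finset.mem_filter]
        exact ⟨Finset.mem_univ _, (Finset.mem_filter.1 hpr).2⟩)]
    have hfiber : ∀ π₁ ∈ A, (P.filter (fun pr =>
        (pr.2.extendDomain (Equiv.refl ↥S)).trans pr.1 = π₁)).card
        = Nat.factorial (2 * k + 1) := by
      intro π₁ hπ₁
      have hsep₁ : Separates π₁ X Y := (Finset.mem_filter.1 hπ₁).2
      have hcb : (P.filter (fun pr =>
          (pr.2.extendDomain (Equiv.refl ↥S)).trans pr.1 = π₁)).card
          = (Finset.univ : Finset (Equiv.Perm ↥S)).card := by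
        refine Finset.card_bij' (fun pr _ => pr.2)
          (fun g _ => ((g.extendDomain (Equiv.refl ↥S)).symm.trans π₁, g)) ?_ ?_ ?_ ?_
        · intro pr hpr
          exact Finset.mem_univ _
        · intro g hg
          rw [Finset.mem_filter]
          refine ⟨?_, by rw [htriv]⟩
          rw [hP, Finset.mem_filter]
          exact ⟨Finset.mem_univ _, by rw [htriv]; exact hsep₁⟩
        · intro pr hpr
          have heq := (Finset.mem_filter.1 hpr).2
          refine Prod.ext ?_ rfl
          show (pr.2.extendDomain (Equiv.refl ↥S)).symm.trans π₁ = pr.1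
          rw [← heq, htriv2]
        · intro g hg
          rfl
      rw [hcb, Finset.card_univ, Fintype.card_perm, Fintype.card_coe, hSc]
    rw [Finset.sum_congr rfl hfiber, Finset.sum_const, smul_eq_mul]
  have hcount2 : P.card
      = Nat.factorial (Fintype.card V) * (Nat.factorial k * Nat.factorial k) := by
    rw [Finset.card_eq_sum_card_fiberwise
      (f := fun pr : (V ≃ Fin (Fintype.card V)) × Equiv.Perm ↥S => pr.1)
      (t := (Finset.univ : Finset (V ≃ Fin (Fintype.card V))))
      (fun pr _ => Finset.mem_univ _)]
    have hfiber : ∀ π ∈ (Finset.univ : Finset (V ≃ Fin (Fintype.card V))),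
        (P.filter (fun pr => pr.1 = π)).card = Nat.factorial k * Nat.factorial k := by
      intro π _
      rw [← crux π S X' Y' y k hX'S hY'S hyS hyX' hyY' hdisj hcover hX'c hY'c hSc]
      refine Finset.card_bij' (fun pr _ => pr.2) (fun g _ => (π, g)) ?_ ?_ ?_ ?_
      · intro pr hpr
        have h1 := (Finset.mem_filter.1 hpr)
        have hfst : pr.1 = π := h1.2
        have hPmem := (Finset.mem_filter.1 (Finset.mem_filter.1 hpr).1).2
        have hsepP := (hsep _).1 hPmem
        rw [Finset.mem_filter]
        refine ⟨Finset.mem_univ _, ?_, ?_⟩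
        · intro x hx
          have hxm := Finset.mem_erase.1 hx
          have h2 := hsepP.1 ↑x hxm.2 hxm.1
          rw [Equiv.trans_apply, Equiv.trans_apply, hextapp pr.2 ↑x x.2,
            hextapp pr.2 y hyS, hfst] at h2
          exact h2
        · intro z hz
          have hzm := Finset.mem_erase.1 hz
          have h2 := hsepP.2 ↑z hzm.2 hzm.1
          rw [Equiv.trans_apply, Equiv.trans_apply, hextapp pr.2 ↑z z.2,
            hextapp pr.2 y hyS, hfst] at h2
          exact h2
      · intro g hg
        have hg' := (Finset.mem_filter.1 hg).2
        rw [Finset.mem_filter]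
        refine ⟨?_, rfl⟩
        rw [hP, Finset.mem_filter]
        refine ⟨Finset.mem_univ _, (hsep _).2 ⟨?_, ?_⟩⟩
        · intro x hxX hxy
          have hxX' : x ∈ X' := Finset.mem_erase.2 ⟨hxy, hxX⟩
          have h2 := hg'.1 ⟨x, hX'S hxX'⟩ hxX'
          rw [Equiv.trans_apply, Equiv.trans_apply, hextapp g x (hX'S hxX'),
            hextapp g y hyS]
          exact h2
        · intro z hzY hzy
          have hzY' : z ∈ Y' := Finset.mem_erase.2 ⟨hzy, hzY⟩
          have h2 := hg'.2 ⟨z, hY'S hzY'⟩ hzY'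
          rw [Equiv.trans_apply, Equiv.trans_apply, hextapp g z (hY'S hzY'),
            hextapp g y hyS]
          exact h2
      · intro pr hpr
        have hfst : pr.1 = π := (Finset.mem_filter.1 hpr).2
        exact Prod.ext hfst.symm rfl
      · intro g hg
        rfl
    rw [Finset.sum_congr rfl hfiber, Finset.sum_const, smul_eq_mul, Finset.card_univ,
      Fintype.card_equiv (Fintype.equivFin V)]
  have hmain : A.card * Nat.factorial (2 * k + 1)
      = Nat.factorial (Fintype.card V) * (Nat.factorial k * Nat.factorial k) := by
    rw [← hcount1, hcount2]
  have h2k : 2 * k + 1 = 2 * n - 1 := by omega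
  have h0 : (Nat.factorial (2 * n - 1) : ℚ) ≠ 0 := by
    exact_mod_cast (Nat.factorial_pos _).ne'
  rw [eq_div_iff h0]
  have hfin : A.card * Nat.factorial (2 * n - 1)
      = Nat.factorial (Fintype.card V) * Nat.factorial k * Nat.factorial k := by
    rw [← h2k, hmain]; ring
  exact_mod_cast hfin
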